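/- There is a universal constant C > 0 such that the following holds. Let X ~ Binomial(m, p) and Y ~ Binomial(n, q) be independent with m ≥ 2, q ∈ [0,1], mp ≥ 64 log m, and p ≤ 2/3. Then for every real ℓ with 1 ≤ ℓ ≤ √(mp log m), Pr(Y ≥ X + ℓ) ≥ Pr(Y ≥ X) · exp(−C ℓ √(log m / (mp))) − 2 m^{-2}. -/

import Mathlib

set_option maxHeartbeats 2000000


open Real Filter

/-- Probability that a Binomial(m, p) random variable equals `k`. -/
noncomputable def binomProb (m : ℕ) (p : ℝ) (k : ℕ) : ℝ :=
  (m.choose k : ℝ) * p ^ k * (1 - p) ^ (m - k)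

/-- For independent `X ~ Binomial(m, p)` and `Y ~ Binomial(n, q)`,
the probability `Pr(Y ≥ X - ℓ)`. -/
noncomputable def prGEshift (m : ℕ) (p : ℝ) (n : ℕ) (q : ℝ) (ℓ : ℝ) : ℝ :=
  ∑ j ∈ Finset.range (m + 1), ∑ k ∈ Finset.range (n + 1),
    if (j : ℝ) - ℓ ≤ (k : ℝ) then binomProb m p j * binomProb n q k else 0

/-- For independent `X ~ Binomial(m, p)` and `Y ~ Binomial(n, q)`,
the probability `Pr(Y ≥ X)`. -/
noncomputable def prGE (m : ℕ) (p : ℝ) (n : ℕ) (q : ℝ) : ℝ :=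
  prGEshift m p n q 0

/-- `P(m, n, p, q) = Pr(Y ≥ X)` for independent `X ~ Binomial(m, max p q)`
and `Y ~ Binomial(n, min p q)`. -/
noncomputable def Pmn (m n : ℕ) (p q : ℝ) : ℝ :=
  prGE m (max p q) n (min p q)

/-- `P(n, p, q) = P(n, n, p, q)`. -/
noncomputable def Pn (n : ℕ) (p q : ℝ) : ℝ :=
  Pmn n n p q

lemma binomProb_nonneg {m : ℕ} {p : ℝ} (hp0 : 0 ≤ p) (hp1 : p ≤ 1) (k : ℕ) :
    0 ≤ binomProb m p k := by
  unfold binomProb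
  have : (0:ℝ) ≤ 1 - p := by linarith
  positivity

lemma sum_binom_mul_pow (m : ℕ) (p x : ℝ) :
    ∑ k ∈ Finset.range (m+1), binomProb m p k * x ^ k = (p * x + (1 - p)) ^ m := by
  rw [add_pow]
  refine Finset.sum_congr rfl fun k hk => ?_
  unfold binomProb
  rw [mul_pow]
  ring

lemma sum_binomProb (m : ℕ) (p : ℝ) :
    ∑ k ∈ Finset.range (m+1), binomProb m p k = 1 := by
  have := sum_binom_mul_pow m p 1
  simpa using this


lemma exp_le_one_add_add_sq {x : ℝ} (hx : |x| ≤ 1) : Real.exp x ≤ 1 + x + x^2 := by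
  have h := Real.exp_bound hx (n := 2) (by norm_num)
  have h2 : ∑ m ∈ Finset.range 2, x ^ m / m.factorial = 1 + x := by
    simp [Finset.sum_range_succ]
  rw [h2] at h
  have h3 := (abs_sub_le_iff.1 h).1
  norm_num [Nat.factorial] at h3
  have hx2 : |x|^2 = x^2 := sq_abs x
  nlinarith [sq_nonneg x]

-- upper tail MGF bound
lemma tail_upper (m : ℕ) (p a l : ℝ) (hp0 : 0 ≤ p) (hp1 : p ≤ 1) (hl : 0 ≤ l) :
    ∑ k ∈ (Finset.range (m+1)).filter (fun k : ℕ => a ≤ (k:ℝ)), binomProb m p k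
      ≤ Real.exp (-(l * a)) * (p * Real.exp l + (1 - p)) ^ m := by
  have key : ∀ k ∈ (Finset.range (m+1)).filter (fun k : ℕ => a ≤ (k:ℝ)),
      binomProb m p k ≤ Real.exp (-(l*a)) * (binomProb m p k * (Real.exp l) ^ k) := by
    intro k hk
    have hka : a ≤ (k:ℝ) := (Finset.mem_filter.1 hk).2
    have hb := binomProb_nonneg hp0 hp1 (m := m) k
    have h1 : (1:ℝ) ≤ Real.exp (-(l*a)) * (Real.exp l)^k := by
      rw [← Real.exp_nat_mul, ← Real.exp_add]
      rw [show (1:ℝ) = Real.exp 0 by simp]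
      apply Real.exp_le_exp.2
      nlinarith
    calc binomProb m p k = binomProb m p k * 1 := by ring
      _ ≤ binomProb m p k * (Real.exp (-(l*a)) * (Real.exp l)^k) := by
          exact mul_le_mul_of_nonneg_left h1 hb
      _ = Real.exp (-(l*a)) * (binomProb m p k * (Real.exp l) ^ k) := by ring
  calc ∑ k ∈ (Finset.range (m+1)).filter (fun k : ℕ => a ≤ (k:ℝ)), binomProb m p k
      ≤ ∑ k ∈ (Finset.range (m+1)).filter (fun k : ℕ => a ≤ (k:ℝ)),
          Real.exp (-(l*a)) * (binomProb m p k * (Real.exp l) ^ k) :=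
        Finset.sum_le_sum key
    _ ≤ ∑ k ∈ Finset.range (m+1), Real.exp (-(l*a)) * (binomProb m p k * (Real.exp l) ^ k) := by
        apply Finset.sum_le_sum_of_subset_of_nonneg (Finset.filter_subset _ _)
        intro k _ _
        have hb := binomProb_nonneg hp0 hp1 (m := m) k
        positivity
    _ = Real.exp (-(l*a)) * (p * Real.exp l + (1 - p)) ^ m := by
        rw [← Finset.mul_sum, sum_binom_mul_pow]

lemma tail_lower (m : ℕ) (p a l : ℝ) (hp0 : 0 ≤ p) (hp1 : p ≤ 1) (hl : 0 ≤ l) :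
    ∑ k ∈ (Finset.range (m+1)).filter (fun k : ℕ => (k:ℝ) ≤ a), binomProb m p k
      ≤ Real.exp (l * a) * (p * Real.exp (-l) + (1 - p)) ^ m := by
  have key : ∀ k ∈ (Finset.range (m+1)).filter (fun k : ℕ => (k:ℝ) ≤ a),
      binomProb m p k ≤ Real.exp (l*a) * (binomProb m p k * (Real.exp (-l)) ^ k) := by
    intro k hk
    have hka : (k:ℝ) ≤ a := (Finset.mem_filter.1 hk).2
    have hb := binomProb_nonneg hp0 hp1 (m := m) k
    have h1 : (1:ℝ) ≤ Real.exp (l*a) * (Real.exp (-l))^k := by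
      rw [← Real.exp_nat_mul, ← Real.exp_add]
      rw [show (1:ℝ) = Real.exp 0 by simp]
      apply Real.exp_le_exp.2
      nlinarith
    calc binomProb m p k = binomProb m p k * 1 := by ring
      _ ≤ binomProb m p k * (Real.exp (l*a) * (Real.exp (-l))^k) :=
          mul_le_mul_of_nonneg_left h1 hb
      _ = Real.exp (l*a) * (binomProb m p k * (Real.exp (-l)) ^ k) := by ring
  calc ∑ k ∈ (Finset.range (m+1)).filter (fun k : ℕ => (k:ℝ) ≤ a), binomProb m p k
      ≤ ∑ k ∈ (Finset.range (m+1)).filter (fun k : ℕ => (k:ℝ) ≤ a),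
          Real.exp (l*a) * (binomProb m p k * (Real.exp (-l)) ^ k) :=
        Finset.sum_le_sum key
    _ ≤ ∑ k ∈ Finset.range (m+1), Real.exp (l*a) * (binomProb m p k * (Real.exp (-l)) ^ k) := by
        apply Finset.sum_le_sum_of_subset_of_nonneg (Finset.filter_subset _ _)
        intro k _ _
        have hb := binomProb_nonneg hp0 hp1 (m := m) k
        positivity
    _ = Real.exp (l*a) * (p * Real.exp (-l) + (1 - p)) ^ m := by
        rw [← Finset.mul_sum, sum_binom_mul_pow]

lemma exp_neg_two_log (m : ℕ) (hm : 0 < m) : Real.exp (-(2 * Real.log m)) = 1/(m:ℝ)^2 := by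
  have h0 : (0:ℝ) < m := by exact_mod_cast hm
  have h : Real.exp (Real.log m) = m := Real.exp_log h0
  rw [show -(2*Real.log m) = -Real.log m + -Real.log m by ring, Real.exp_add, Real.exp_neg, h]
  field_simp

lemma chernoff_up (m : ℕ) (p s : ℝ) (hp0 : 0 ≤ p) (hp1 : p ≤ 1) (hs0 : 0 < s) (hs8 : s ≤ 1/8)
    (hm : 0 < m) (hlog : (m:ℝ)*p*s^2 = Real.log m) :
    ∑ k ∈ (Finset.range (m+1)).filter
        (fun k : ℕ => (m:ℝ)*p + 3*((m:ℝ)*p)*s ≤ (k:ℝ)), binomProb m p k ≤ 1/(m:ℝ)^2 := by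
  set μ := (m:ℝ)*p with hμ
  have hμ0 : 0 ≤ μ := by positivity
  set l := (3/2)*s with hldef
  have hl0 : 0 ≤ l := by positivity
  have hl1 : l ≤ 1 := by rw [hldef]; linarith
  have habs : |l| ≤ 1 := by rw [abs_of_nonneg hl0]; exact hl1
  have hexp : Real.exp l ≤ 1 + l + l^2 := exp_le_one_add_add_sq habs
  have hbase : p * Real.exp l + (1 - p) ≤ Real.exp (p * (l + l^2)) := by
    have h1 : p * Real.exp l + (1 - p) ≤ 1 + p * (l + l^2) := by nlinarith [Real.exp_pos l]
    have h2 : 1 + p * (l + l^2) ≤ Real.exp (p * (l + l^2)) := by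
      have := Real.add_one_le_exp (p * (l + l^2)); linarith
    linarith
  have hbase0 : 0 ≤ p * Real.exp l + (1 - p) := by nlinarith [Real.exp_pos l]
  have hpow : (p * Real.exp l + (1 - p)) ^ m ≤ Real.exp (μ * (l + l^2)) := by
    calc (p * Real.exp l + (1 - p)) ^ m ≤ (Real.exp (p * (l + l^2))) ^ m :=
          pow_le_pow_left₀ hbase0 hbase m
      _ = Real.exp (μ * (l + l^2)) := by
          rw [← Real.exp_nat_mul]; congr 1; rw [hμ]; ring
  calc ∑ k ∈ (Finset.range (m+1)).filter
        (fun k : ℕ => μ + 3*μ*s ≤ (k:ℝ)), binomProb m p k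
      ≤ Real.exp (-(l * (μ + 3*μ*s))) * (p * Real.exp l + (1 - p)) ^ m :=
        tail_upper m p (μ + 3*μ*s) l hp0 hp1 hl0
    _ ≤ Real.exp (-(l * (μ + 3*μ*s))) * Real.exp (μ * (l + l^2)) := by
        exact mul_le_mul_of_nonneg_left hpow (le_of_lt (Real.exp_pos _))
    _ = Real.exp (μ * (l + l^2) - l * (μ + 3*μ*s)) := by
        rw [← Real.exp_add]; congr 1; ring
    _ ≤ Real.exp (-(2 * Real.log m)) := by
        apply Real.exp_le_exp.2
        have : μ * (l + l^2) - l * (μ + 3*μ*s) = -(9/4) * (μ * s^2) := by rw [hldef]; ring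
        rw [this, hlog]
        have hlm : 0 ≤ Real.log m := Real.log_natCast_nonneg m
        linarith
    _ = 1/(m:ℝ)^2 := exp_neg_two_log m hm

lemma chernoff_down (m : ℕ) (p s : ℝ) (hp0 : 0 ≤ p) (hp1 : p ≤ 1) (hs0 : 0 < s) (hs8 : s ≤ 1/8)
    (hm : 0 < m) (hlog : (m:ℝ)*p*s^2 = Real.log m) :
    ∑ k ∈ (Finset.range (m+1)).filter
        (fun k : ℕ => (k:ℝ) ≤ (m:ℝ)*p - 3*((m:ℝ)*p)*s), binomProb m p k ≤ 1/(m:ℝ)^2 := by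
  set μ := (m:ℝ)*p with hμ
  have hμ0 : 0 ≤ μ := by positivity
  set l := (3/2)*s with hldef
  have hl0 : 0 ≤ l := by positivity
  have hl1 : l ≤ 1 := by rw [hldef]; linarith
  have habs : |(-l)| ≤ 1 := by rw [abs_neg, abs_of_nonneg hl0]; exact hl1
  have hexp : Real.exp (-l) ≤ 1 - l + l^2 := by
    have := exp_le_one_add_add_sq habs; rw [neg_pow] at this; simpa using by linarith [this]
  have hbase : p * Real.exp (-l) + (1 - p) ≤ Real.exp (p * (-l + l^2)) := by
    have h1 : p * Real.exp (-l) + (1 - p) ≤ 1 + p * (-l + l^2) := by nlinarith [Real.exp_pos (-l)]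
    have h2 : 1 + p * (-l + l^2) ≤ Real.exp (p * (-l + l^2)) := by
      have := Real.add_one_le_exp (p * (-l + l^2)); linarith
    linarith
  have hbase0 : 0 ≤ p * Real.exp (-l) + (1 - p) := by nlinarith [Real.exp_pos (-l)]
  have hpow : (p * Real.exp (-l) + (1 - p)) ^ m ≤ Real.exp (μ * (-l + l^2)) := by
    calc (p * Real.exp (-l) + (1 - p)) ^ m ≤ (Real.exp (p * (-l + l^2))) ^ m :=
          pow_le_pow_left₀ hbase0 hbase m
      _ = Real.exp (μ * (-l + l^2)) := by
          rw [← Real.exp_nat_mul]; congr 1; rw [hμ]; ring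
  calc ∑ k ∈ (Finset.range (m+1)).filter
        (fun k : ℕ => (k:ℝ) ≤ μ - 3*μ*s), binomProb m p k
      ≤ Real.exp (l * (μ - 3*μ*s)) * (p * Real.exp (-l) + (1 - p)) ^ m :=
        tail_lower m p (μ - 3*μ*s) l hp0 hp1 hl0
    _ ≤ Real.exp (l * (μ - 3*μ*s)) * Real.exp (μ * (-l + l^2)) :=
        mul_le_mul_of_nonneg_left hpow (le_of_lt (Real.exp_pos _))
    _ = Real.exp (μ * (-l + l^2) + l * (μ - 3*μ*s)) := by
        rw [← Real.exp_add]; congr 1; ring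
    _ ≤ Real.exp (-(2 * Real.log m)) := by
        apply Real.exp_le_exp.2
        have : μ * (-l + l^2) + l * (μ - 3*μ*s) = -(9/4) * (μ * s^2) := by rw [hldef]; ring
        rw [this, hlog]
        have hlm : 0 ≤ Real.log m := Real.log_natCast_nonneg m
        linarith
    _ = 1/(m:ℝ)^2 := exp_neg_two_log m hm

lemma ratio_arith {s : ℝ} (hs0 : 0 < s) (hs8 : s ≤ 1/8) :
    Real.exp (-(26*s)) * (1+12*s) ≤ 1 - 5*s := by
  have h1 : Real.exp (-(26*s)) ≤ Real.exp (-((40/3)*s)) * Real.exp (-(12*s)) := by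
    rw [← Real.exp_add]
    apply Real.exp_le_exp.2; linarith
  have e40 := Real.add_one_le_exp ((40/3)*s)
  have e12 := Real.add_one_le_exp (12*s)
  have m40 : Real.exp (-((40/3)*s)) * Real.exp ((40/3)*s) = 1 := by
    rw [← Real.exp_add]; simp
  have m12 : Real.exp (-(12*s)) * Real.exp (12*s) = 1 := by
    rw [← Real.exp_add]; simp
  have p40 := Real.exp_pos (-((40/3)*s))
  have p12 := Real.exp_pos (-(12*s))
  have h40 : Real.exp (-((40/3)*s)) * (1 + (40/3)*s) ≤ 1 := by nlinarith
  have h12 : Real.exp (-(12*s)) * (1 + 12*s) ≤ 1 := by nlinarith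
  -- 1/(1+(40/3)s) ≤ 1-5s  since (1-5s)(1+(40/3)s) ≥ 1 for s ≤ 1/8
  have key : Real.exp (-((40/3)*s)) ≤ 1 - 5*s := by nlinarith
  calc Real.exp (-(26*s)) * (1+12*s)
      ≤ (Real.exp (-((40/3)*s)) * Real.exp (-(12*s))) * (1+12*s) := by nlinarith
    _ = Real.exp (-((40/3)*s)) * (Real.exp (-(12*s)) * (1+12*s)) := by ring
    _ ≤ Real.exp (-((40/3)*s)) * 1 := by nlinarith
    _ ≤ 1 - 5*s := by linarith

lemma step_ratio (m j : ℕ) (p s : ℝ) (hp0 : 0 < p) (hp23 : p ≤ 2/3)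
    (hs0 : 0 < s) (hs8 : s ≤ 1/8) (hμs : 1 ≤ (m:ℝ)*p*s)
    (hj1 : 1 ≤ j) (hjm : j ≤ m)
    (hjlow : (m:ℝ)*p - 5*((m:ℝ)*p)*s ≤ (j:ℝ)) :
    Real.exp (-(26*s)) * binomProb m p j ≤ binomProb m p (j - 1) := by
  set μ := (m:ℝ)*p with hμdef
  have hμ0 : 0 < μ := by
    nlinarith
  have hmj : (j:ℝ) ≤ (m:ℝ) := by exact_mod_cast hjm
  have hj0 : (1:ℝ) ≤ (j:ℝ) := by exact_mod_cast hj1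
  -- choose identity
  have hch : (m.choose j : ℝ) * j = (m.choose (j-1) : ℝ) * ((m:ℝ) - (j:ℝ) + 1) := by
    have h := Nat.choose_succ_right_eq m (j-1)
    rw [Nat.sub_add_cancel hj1] at h
    have hc : ((m.choose j * j : ℕ) : ℝ) = ((m.choose (j-1) * (m - (j-1)) : ℕ) : ℝ) := by
      exact_mod_cast congrArg Nat.cast h
    push_cast [Nat.sub_sub, Nat.cast_sub (le_trans (Nat.sub_le j 1) hjm),
      Nat.cast_sub hj1] at hc
    push_cast at hc ⊢
    linarith [hc]
  -- numeric key : exp(-(26s)) * p * (m - j + 1) ≤ j * (1-p)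
  have hD0 : (0:ℝ) < (m:ℝ) - j + 1 := by linarith
  have hE0 : (0:ℝ) < Real.exp (-(26*s)) := Real.exp_pos _
  have hE1 : Real.exp (-(26*s)) ≤ 1 := by
    rw [Real.exp_le_one_iff]; linarith
  have hra := ratio_arith hs0 hs8
  have key : Real.exp (-(26*s)) * (p * ((m:ℝ) - j + 1)) ≤ (j:ℝ) * (1-p) := by
    have hDle : (m:ℝ) - j + 1 ≤ (m:ℝ)*(1-p) + 6*μ*s := by
      have : (j:ℝ) ≥ μ - 5*μ*s := hjlow
      nlinarith
    have h1 : p * ((m:ℝ) - j + 1) ≤ μ*(1-p) + 6*μ*s*p := by nlinarith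
    have h2 : μ*(1-p) + 6*μ*s*p ≤ μ*(1-p)*(1+12*s) := by nlinarith
    have h3 : Real.exp (-(26*s)) * (μ*(1-p)*(1+12*s)) ≤ μ*(1-p)*(1-5*s) := by nlinarith
    have h4 : μ*(1-5*s)*(1-p) ≤ (j:ℝ)*(1-p) := by nlinarith
    nlinarith
  -- expand binomProb
  have hjmn : m - (j-1) = (m - j) + 1 := by omega
  have hpowp : p ^ j = p ^ (j-1) * p := by
    conv_lhs => rw [show j = (j-1)+1 by omega]
    rw [pow_succ]
  unfold binomProb
  rw [hjmn, pow_succ]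
  have hnn : (0:ℝ) ≤ p ^ (j-1) * (1-p)^(m-j) := by
    have : (0:ℝ) ≤ 1 - p := by linarith
    positivity
  -- goal: exp * (choose j * p^j * (1-p)^(m-j)) ≤ choose (j-1) * p^(j-1) * ((1-p)^(m-j) * (1-p))
  have main : Real.exp (-(26*s)) * ((m.choose j : ℝ) * p) ≤ (m.choose (j-1) : ℝ) * (1-p) := by
    have hjpos : (0:ℝ) < (j:ℝ) := by linarith
    rw [← mul_le_mul_iff_of_pos_right hD0]
    calc Real.exp (-(26*s)) * ((m.choose j : ℝ) * p) * ((m:ℝ) - j + 1)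
        = (m.choose j : ℝ) * (Real.exp (-(26*s)) * (p * ((m:ℝ) - j + 1))) := by ring
      _ ≤ (m.choose j : ℝ) * ((j:ℝ) * (1-p)) := by
          apply mul_le_mul_of_nonneg_left key (by positivity)
      _ = ((m.choose j : ℝ) * j) * (1-p) := by ring
      _ = (m.choose (j-1) : ℝ) * ((m:ℝ) - (j:ℝ) + 1) * (1-p) := by rw [hch]
      _ = (m.choose (j-1) : ℝ) * (1-p) * ((m:ℝ) - j + 1) := by ring
  calc Real.exp (-(26*s)) * ((m.choose j : ℝ) * p ^ j * (1 - p) ^ (m - j))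
      = (Real.exp (-(26*s)) * ((m.choose j : ℝ) * p)) * (p ^ (j-1) * (1-p)^(m-j)) := by
        rw [hpowp]; ring
    _ ≤ ((m.choose (j-1) : ℝ) * (1-p)) * (p ^ (j-1) * (1-p)^(m-j)) :=
        mul_le_mul_of_nonneg_right main hnn
    _ = (m.choose (j-1) : ℝ) * p ^ (j-1) * ((1 - p) ^ (m - j) * (1-p)) := by ring

lemma chain (m : ℕ) (p s : ℝ) (hp0 : 0 < p) (hp23 : p ≤ 2/3)
    (hs0 : 0 < s) (hs8 : s ≤ 1/8) (hμs : 1 ≤ (m:ℝ)*p*s)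
    (L : ℕ) (hL : (L:ℝ) ≤ 2*((m:ℝ)*p)*s)
    (j : ℕ) (hjm : j ≤ m) (hjlow : (m:ℝ)*p - 3*((m:ℝ)*p)*s ≤ (j:ℝ)) :
    ∀ i : ℕ, i ≤ L →
      Real.exp (-(26*(i:ℝ)*s)) * binomProb m p j ≤ binomProb m p (j - i) := by
  have hμ0 : 0 < (m:ℝ)*p := by nlinarith
  have hμ8 : 8 ≤ (m:ℝ)*p := by
    have : (m:ℝ)*p*s ≤ (m:ℝ)*p*(1/8) := by nlinarith
    nlinarith
  intro i
  induction i with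
  | zero => intro _; simp
  | succ i ih =>
    intro hiL
    have hi : i ≤ L := by omega
    have IH := ih hi
    set μ := (m:ℝ)*p with hμdef
    -- the intermediate index j - i
    have hicast : (i:ℝ) ≤ (L:ℝ) - 1 := by
      have : (i:ℝ) + 1 ≤ (L:ℝ) := by exact_mod_cast hiL
      linarith
    have hjR : (j:ℝ) ≥ μ - 3*μ*s := hjlow
    have hji_real : (j:ℝ) - i ≥ μ - 5*μ*s + 1 := by nlinarith
    have hμ5 : μ - 5*μ*s ≥ 3*μ/8 := by nlinarith
    have hij : i + 1 ≤ j := by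
      have : (j:ℝ) - i ≥ 1 := by nlinarith
      have : (i:ℝ) + 1 ≤ (j:ℝ) := by linarith
      exact_mod_cast this
    have hcast : ((j - i : ℕ) : ℝ) = (j:ℝ) - (i:ℝ) := by
      have : i ≤ j := by omega
      push_cast [Nat.cast_sub this]
      ring
    have hstep := step_ratio m (j - i) p s hp0 hp23 hs0 hs8 hμs
      (by omega) (by omega) (by rw [hcast]; nlinarith)
    have hsub : j - i - 1 = j - (i+1) := by omega
    rw [hsub] at hstep
    have hE : (0:ℝ) < Real.exp (-(26*s)) := Real.exp_pos _
    have hexpeq : Real.exp (-(26*((i+1:ℕ):ℝ)*s)) = Real.exp (-(26*s)) * Real.exp (-(26*(i:ℝ)*s)) := by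
      rw [← Real.exp_add]; congr 1; push_cast; ring
    calc Real.exp (-(26*((i+1:ℕ):ℝ)*s)) * binomProb m p j
        = Real.exp (-(26*s)) * (Real.exp (-(26*(i:ℝ)*s)) * binomProb m p j) := by
          rw [hexpeq]; ring
      _ ≤ Real.exp (-(26*s)) * binomProb m p (j - i) := by
          exact mul_le_mul_of_nonneg_left IH (le_of_lt hE)
      _ ≤ binomProb m p (j - (i+1)) := hstep

noncomputable def Gtail (n : ℕ) (q : ℝ) (i : ℕ) : ℝ :=
  ∑ k ∈ Finset.range (n+1), if i ≤ k then binomProb n q k else 0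

lemma Gtail_nonneg {n : ℕ} {q : ℝ} (hq0 : 0 ≤ q) (hq1 : q ≤ 1) (i : ℕ) : 0 ≤ Gtail n q i := by
  apply Finset.sum_nonneg
  intro k _
  split
  · exact binomProb_nonneg hq0 hq1 k
  · exact le_refl 0

lemma Gtail_le_one {n : ℕ} {q : ℝ} (hq0 : 0 ≤ q) (hq1 : q ≤ 1) (i : ℕ) : Gtail n q i ≤ 1 := by
  rw [← sum_binomProb n q]
  apply Finset.sum_le_sum
  intro k _
  split
  · exact le_refl _
  · exact binomProb_nonneg hq0 hq1 k

lemma prGE_eq (m n : ℕ) (p q : ℝ) :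
    prGE m p n q = ∑ j ∈ Finset.range (m+1), binomProb m p j * Gtail n q j := by
  unfold prGE prGEshift Gtail
  refine Finset.sum_congr rfl fun j _ => ?_
  rw [Finset.mul_sum]
  refine Finset.sum_congr rfl fun k _ => ?_
  rw [mul_ite, mul_zero]
  congr 1
  simp only [sub_zero, Nat.cast_le]

lemma prGEshift_eq (m n : ℕ) (p q ℓ : ℝ) (hl : 1 ≤ ℓ) :
    prGEshift m p n q (-ℓ) =
      ∑ j ∈ Finset.range (m+1), binomProb m p j * Gtail n q (j + ⌈ℓ⌉₊) := by
  unfold prGEshift Gtail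
  refine Finset.sum_congr rfl fun j _ => ?_
  rw [Finset.mul_sum]
  refine Finset.sum_congr rfl fun k _ => ?_
  rw [mul_ite, mul_zero]
  congr 1
  simp only [sub_neg_eq_add, eq_iff_iff]
  constructor
  · intro h
    have hjk : j < k := by
      by_contra hc
      push_neg at hc
      have : (k:ℝ) ≤ (j:ℝ) := by exact_mod_cast hc
      linarith
    have hjk' : j ≤ k := le_of_lt hjk
    have : ℓ ≤ (k:ℝ) - (j:ℝ) := by linarith
    have h2 : ℓ ≤ ((k - j : ℕ) : ℝ) := by
      rwa [Nat.cast_sub hjk']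
    have h3 : ⌈ℓ⌉₊ ≤ k - j := Nat.ceil_le.2 h2
    omega
  · intro h
    have h1 : (1:ℕ) ≤ ⌈ℓ⌉₊ := Nat.one_le_ceil_iff.2 (by linarith)
    have hjk : j ≤ k := by omega
    have h3 : ⌈ℓ⌉₊ ≤ k - j := by omega
    have h4 : ℓ ≤ ((k - j : ℕ) : ℝ) := le_trans (Nat.le_ceil ℓ) (by exact_mod_cast h3)
    rw [Nat.cast_sub hjk] at h4
    linarith

lemma core (m n : ℕ) (p q s : ℝ) (L : ℕ)
    (hp0 : 0 < p) (hp23 : p ≤ 2/3) (hq0 : 0 ≤ q) (hq1 : q ≤ 1)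
    (hs0 : 0 < s) (hs8 : s ≤ 1/8) (hμs : 1 ≤ (m:ℝ)*p*s)
    (hL : (L:ℝ) ≤ 2*((m:ℝ)*p)*s) (hm : 0 < m) (hlog : (m:ℝ)*p*s^2 = Real.log m) :
    Real.exp (-(26*(L:ℝ)*s)) * (∑ j ∈ Finset.range (m+1), binomProb m p j * Gtail n q j)
        - 2/(m:ℝ)^2
      ≤ ∑ j ∈ Finset.range (m+1), binomProb m p j * Gtail n q (j + L) := by
  have hp1 : p ≤ 1 := by linarith
  have hμ0 : 0 < (m:ℝ)*p := by
    have : (0:ℝ) < m := by exact_mod_cast hm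
    positivity
  set μ := (m:ℝ)*p with hμdef
  have hbnn : ∀ k, 0 ≤ binomProb m p k := binomProb_nonneg (le_of_lt hp0) hp1
  have hGnn : ∀ i, 0 ≤ Gtail n q i := Gtail_nonneg hq0 hq1
  have hG1 : ∀ i, Gtail n q i ≤ 1 := Gtail_le_one hq0 hq1
  set I := (Finset.range (m+1)).filter
    (fun j : ℕ => μ - 3*μ*s ≤ (j:ℝ) ∧ (j:ℝ) ≤ μ + 3*μ*s) with hIdef
  -- every element of I is ≥ L
  have hIL : ∀ j ∈ I, L ≤ j := by
    intro j hj
    rw [hIdef, Finset.mem_filter] at hj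
    have h1 : μ - 3*μ*s ≤ (j:ℝ) := hj.2.1
    have h2 : (L:ℝ) ≤ 2*μ*s := hL
    have : (L:ℝ) ≤ (j:ℝ) := by nlinarith
    exact_mod_cast this
  -- Step 1 : reindex
  have step1 : ∑ j ∈ I, binomProb m p (j - L) * Gtail n q j
      ≤ ∑ j ∈ Finset.range (m+1), binomProb m p j * Gtail n q (j + L) := by
    have hinj : ∀ x ∈ I, ∀ y ∈ I, x - L = y - L → x = y := by
      intro x hx y hy hxy
      have := hIL x hx; have := hIL y hy; omega
    have himage := Finset.sum_image (f := fun j => binomProb m p j * Gtail n q (j + L)) hinj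
    have hsub : I.image (· - L) ⊆ Finset.range (m+1) := by
      intro x hx
      rw [Finset.mem_image] at hx
      obtain ⟨j, hj, rfl⟩ := hx
      rw [hIdef, Finset.mem_filter, Finset.mem_range] at hj
      rw [Finset.mem_range]; omega
    calc ∑ j ∈ I, binomProb m p (j - L) * Gtail n q j
        = ∑ j ∈ I, binomProb m p (j - L) * Gtail n q ((j - L) + L) := by
          refine Finset.sum_congr rfl fun j hj => ?_
          rw [Nat.sub_add_cancel (hIL j hj)]
      _ = ∑ x ∈ I.image (· - L), binomProb m p x * Gtail n q (x + L) := himage.symm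
      _ ≤ ∑ j ∈ Finset.range (m+1), binomProb m p j * Gtail n q (j + L) := by
          apply Finset.sum_le_sum_of_subset_of_nonneg hsub
          intro j _ _
          exact mul_nonneg (hbnn j) (hGnn _)
  -- Step 2 : ratio bound on I
  have step2 : Real.exp (-(26*(L:ℝ)*s)) * (∑ j ∈ I, binomProb m p j * Gtail n q j)
      ≤ ∑ j ∈ I, binomProb m p (j - L) * Gtail n q j := by
    rw [Finset.mul_sum]
    apply Finset.sum_le_sum
    intro j hj
    rw [hIdef, Finset.mem_filter, Finset.mem_range] at hj
    have hc := chain m p s hp0 hp23 hs0 hs8 hμs L hL j (by omega) hj.2.1 L (le_refl L)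
    calc Real.exp (-(26*(L:ℝ)*s)) * (binomProb m p j * Gtail n q j)
        = (Real.exp (-(26*(L:ℝ)*s)) * binomProb m p j) * Gtail n q j := by ring
      _ ≤ binomProb m p (j - L) * Gtail n q j :=
          mul_le_mul_of_nonneg_right hc (hGnn j)
  -- Step 3 : tail bound
  have step3 : ∑ j ∈ Finset.range (m+1), binomProb m p j * Gtail n q j
      ≤ (∑ j ∈ I, binomProb m p j * Gtail n q j) + 2/(m:ℝ)^2 := by
    have hsplit := Finset.sum_filter_add_sum_filter_not (Finset.range (m+1))
      (fun j : ℕ => μ - 3*μ*s ≤ (j:ℝ) ∧ (j:ℝ) ≤ μ + 3*μ*s)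
      (fun j => binomProb m p j * Gtail n q j)
    rw [← hIdef] at hsplit
    have htail : ∑ j ∈ (Finset.range (m+1)).filter
        (fun j : ℕ => ¬(μ - 3*μ*s ≤ (j:ℝ) ∧ (j:ℝ) ≤ μ + 3*μ*s)),
          binomProb m p j * Gtail n q j ≤ 2/(m:ℝ)^2 := by
      have h1 : ∑ j ∈ (Finset.range (m+1)).filter
          (fun j : ℕ => ¬(μ - 3*μ*s ≤ (j:ℝ) ∧ (j:ℝ) ≤ μ + 3*μ*s)),
            binomProb m p j * Gtail n q j
          ≤ ∑ j ∈ (Finset.range (m+1)).filter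
          (fun j : ℕ => ¬(μ - 3*μ*s ≤ (j:ℝ) ∧ (j:ℝ) ≤ μ + 3*μ*s)), binomProb m p j := by
        apply Finset.sum_le_sum
        intro j _
        calc binomProb m p j * Gtail n q j ≤ binomProb m p j * 1 :=
              mul_le_mul_of_nonneg_left (hG1 j) (hbnn j)
          _ = binomProb m p j := mul_one _
      have h2 : ∑ j ∈ (Finset.range (m+1)).filter
          (fun j : ℕ => ¬(μ - 3*μ*s ≤ (j:ℝ) ∧ (j:ℝ) ≤ μ + 3*μ*s)), binomProb m p j
          ≤ (∑ k ∈ (Finset.range (m+1)).filter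
              (fun k : ℕ => (k:ℝ) ≤ μ - 3*μ*s), binomProb m p k)
            + ∑ k ∈ (Finset.range (m+1)).filter
              (fun k : ℕ => μ + 3*μ*s ≤ (k:ℝ)), binomProb m p k := by
        rw [Finset.sum_filter, Finset.sum_filter, Finset.sum_filter, ← Finset.sum_add_distrib]
        apply Finset.sum_le_sum
        intro j _
        have hb := hbnn j
        rcases le_or_gt ((j:ℝ)) (μ - 3*μ*s) with hlo | hlo
        · rw [if_pos hlo]
          have h0 : (0:ℝ) ≤ (if μ + 3*μ*s ≤ (j:ℝ) then binomProb m p j else 0) := by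
            split <;> linarith
          split <;> linarith
        · rw [if_neg (not_le.2 hlo)]
          rcases le_or_gt (μ + 3*μ*s) ((j:ℝ)) with hhi | hhi
          · rw [if_pos hhi]
            split <;> linarith
          · rw [if_neg (not_le.2 hhi)]
            rw [if_neg (not_not_intro ⟨le_of_lt hlo, le_of_lt hhi⟩)]
            linarith
      calc _ ≤ _ := h1
        _ ≤ _ := h2
        _ ≤ 1/(m:ℝ)^2 + 1/(m:ℝ)^2 := by
            exact add_le_add (chernoff_down m p s (le_of_lt hp0) hp1 hs0 hs8 hm hlog)
              (chernoff_up m p s (le_of_lt hp0) hp1 hs0 hs8 hm hlog)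
        _ = 2/(m:ℝ)^2 := by ring
    linarith [hsplit, htail]
  -- combine
  have hE1 : Real.exp (-(26*(L:ℝ)*s)) ≤ 1 := by
    rw [Real.exp_le_one_iff]
    have : (0:ℝ) ≤ (L:ℝ) := Nat.cast_nonneg L
    nlinarith
  have hE0 : 0 < Real.exp (-(26*(L:ℝ)*s)) := Real.exp_pos _
  have hIsum_nn : 0 ≤ ∑ j ∈ I, binomProb m p j * Gtail n q j :=
    Finset.sum_nonneg fun j _ => mul_nonneg (hbnn j) (hGnn j)
  have hm2 : (0:ℝ) < 2/(m:ℝ)^2 := by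
    have : (0:ℝ) < m := by exact_mod_cast hm
    positivity
  calc Real.exp (-(26*(L:ℝ)*s)) * (∑ j ∈ Finset.range (m+1), binomProb m p j * Gtail n q j)
        - 2/(m:ℝ)^2
      ≤ Real.exp (-(26*(L:ℝ)*s)) * ((∑ j ∈ I, binomProb m p j * Gtail n q j) + 2/(m:ℝ)^2)
        - 2/(m:ℝ)^2 := by
        have := mul_le_mul_of_nonneg_left step3 (le_of_lt hE0)
        linarith
    _ = Real.exp (-(26*(L:ℝ)*s)) * (∑ j ∈ I, binomProb m p j * Gtail n q j)
        + Real.exp (-(26*(L:ℝ)*s)) * (2/(m:ℝ)^2) - 2/(m:ℝ)^2 := by ring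
    _ ≤ Real.exp (-(26*(L:ℝ)*s)) * (∑ j ∈ I, binomProb m p j * Gtail n q j) := by nlinarith
    _ ≤ ∑ j ∈ I, binomProb m p (j - L) * Gtail n q j := step2
    _ ≤ _ := step1

theorem large_majority_lower_bound :
    ∃ C : ℝ, 0 < C ∧ ∀ (m n : ℕ) (p q ℓ : ℝ),
      2 ≤ m → 0 ≤ q → q ≤ 1 → 0 ≤ p → p ≤ 2 / 3 →
      64 * Real.log m ≤ (m : ℝ) * p →
      1 ≤ ℓ → ℓ ≤ Real.sqrt ((m : ℝ) * p * Real.log m) →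
      prGE m p n q * Real.exp (-(C * ℓ * Real.sqrt (Real.log m / ((m : ℝ) * p))))
          - 2 / (m : ℝ) ^ 2 ≤
        prGEshift m p n q (-ℓ) := by
  refine ⟨100, by norm_num, ?_⟩
  intro m n p q ℓ hm2 hq0 hq1 hp0' hp23 h64 hl1 hl2
  have hm0 : 0 < m := by omega
  have hmR : (2:ℝ) ≤ (m:ℝ) := by exact_mod_cast hm2
  have hlm : 0 < Real.log m := Real.log_pos (by linarith)
  have hμ0 : 0 < (m:ℝ)*p := by linarith
  set μ := (m:ℝ)*p with hμdef
  have hp0 : 0 < p := by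
    by_contra hc
    push_neg at hc
    have : μ ≤ 0 := by
      rw [hμdef]
      apply mul_nonpos_of_nonneg_of_nonpos (Nat.cast_nonneg m) hc
    linarith
  set s := Real.sqrt (Real.log m / μ) with hsdef
  have harg : 0 < Real.log m / μ := div_pos hlm hμ0
  have hs0 : 0 < s := Real.sqrt_pos.2 harg
  have hs2 : s^2 = Real.log m / μ := Real.sq_sqrt (le_of_lt harg)
  have hlog : μ * s^2 = Real.log m := by
    rw [hs2]
    field_simp
  have hs8 : s ≤ 1/8 := by
    have h1 : s^2 ≤ 1/64 := by
      rw [hs2, div_le_iff₀ hμ0]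
      linarith
    nlinarith
  have hμs_eq : Real.sqrt (μ * Real.log m) = μ * s := by
    have h1 : (μ * s)^2 = μ * Real.log m := by
      rw [mul_pow, hs2]
      field_simp
    rw [← h1, Real.sqrt_sq (by positivity)]
  have hl2' : ℓ ≤ μ * s := by rw [← hμs_eq]; exact hl2
  have hμs : 1 ≤ μ * s := le_trans hl1 hl2'
  set L := ⌈ℓ⌉₊ with hLdef
  have hLle : (L:ℝ) ≤ 2*μ*s := by
    have h1 : (L:ℝ) < ℓ + 1 := Nat.ceil_lt_add_one (by linarith)
    linarith
  have hcore := core m n p q s L hp0 hp23 hq0 hq1 hs0 hs8 (by rw [← hμdef]; exact hμs)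
    (by rw [← hμdef]; linarith) hm0 (by rw [← hμdef]; exact hlog)
  rw [← prGE_eq, ← prGEshift_eq m n p q ℓ hl1] at hcore
  have hprGE_nn : 0 ≤ prGE m p n q := by
    rw [prGE_eq]
    exact Finset.sum_nonneg fun j _ =>
      mul_nonneg (binomProb_nonneg (le_of_lt hp0) (by linarith) j) (Gtail_nonneg hq0 hq1 j)
  have hexp_le : Real.exp (-(100 * ℓ * s)) ≤ Real.exp (-(26*(L:ℝ)*s)) := by
    apply Real.exp_le_exp.2
    have hLl : (L:ℝ) ≤ 2*ℓ := by
      have h1 : (L:ℝ) < ℓ + 1 := Nat.ceil_lt_add_one (by linarith)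
      linarith
    nlinarith
  have hmono : prGE m p n q * Real.exp (-(100 * ℓ * s))
      ≤ Real.exp (-(26*(L:ℝ)*s)) * prGE m p n q := by
    rw [mul_comm]
    exact mul_le_mul_of_nonneg_right hexp_le hprGE_nn
  calc prGE m p n q * Real.exp (-(100 * ℓ * s)) - 2/(m:ℝ)^2
      ≤ Real.exp (-(26*(L:ℝ)*s)) * prGE m p n q - 2/(m:ℝ)^2 := by linarith
    _ ≤ prGEshift m p n q (-ℓ) := hcore
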